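/- Let G be a connected graph with Laplacian matrix L. Then for every vector x with all entries nonzero and Σ_{u∈V(G)} x_u = 0, α(G) ≤ (xᵀ L# x) · max_{u∈V(G)} L_{uu}/x_u². -/

import Mathlib

open scoped Classical
open Matrix Finset

/-- The independence number of a finite simple graph. -/
noncomputable def indepNum {V : Type*} [Fintype V] (G : SimpleGraph V) : ℕ :=
  sSup {k | ∃ S : Finset V, (∀ u ∈ S, ∀ v ∈ S, u ≠ v → ¬ G.Adj u v) ∧ S.card = k}

/-- Corollary 3.5: for a connected graph G with Laplacian L and any totally nonzero
vector x summing to 0, α(G) ≤ (xᵀ L# x) · max_u L_{uu}/x_u², where X is the group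
inverse of L. -/
theorem stmt8 (n : ℕ) (G : SimpleGraph (Fin n)) (hconn : G.Connected)
    (L : Matrix (Fin n) (Fin n) ℝ) (hL : L = G.lapMatrix ℝ)
    (X : Matrix (Fin n) (Fin n) ℝ)
    (h1 : L * X * L = L) (h2 : X * L * X = X) (h3 : L * X = X * L)
    (x : Fin n → ℝ) (hx : ∀ u, x u ≠ 0) (hsum : ∑ u : Fin n, x u = 0) :
    (indepNum G : ℝ) ≤ (x ⬝ᵥ X.mulVec x) * ⨆ u : Fin n, L u u / (x u) ^ 2 := by
  subst hL
  have hne : Nonempty (Fin n) := hconn.nonempty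
  have hn1 : n ≠ 1 := by
    rintro rfl
    have := hsum
    simp [Fin.sum_univ_one] at this
    exact hx 0 this
  have hn2 : 2 ≤ n := by
    rcases hne with ⟨u⟩
    have := u.2
    omega
  haveI : Nontrivial (Fin n) := Fin.nontrivial_iff_two_le.mpr hn2
  set Lm := G.lapMatrix ℝ with hLm
  -- degrees are positive
  have hdeg : ∀ u : Fin n, 0 < G.degree u := by
    intro u
    rw [G.degree_pos_iff_exists_adj u]
    obtain ⟨v, hv⟩ := exists_ne u
    obtain ⟨w⟩ := hconn u v
    cases w with
    | nil => exact absurd rfl hv.symm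
    | cons h p => exact ⟨_, h⟩
  have hsymm : Lmᵀ = Lm := G.isSymm_lapMatrix ℝ
  -- Step A : L *ᵥ (X *ᵥ x) = x
  set z := X.mulVec x with hz
  have hker : Lm *ᵥ z = x := by
    set w := (Lm * X) *ᵥ x - x with hw
    have hLw : Lm *ᵥ w = 0 := by
      have hLLX : Lm * (Lm * X) = Lm := by
        calc Lm * (Lm * X) = Lm * (X * Lm) := by rw [h3]
        _ = Lm * X * Lm := by rw [mul_assoc]
        _ = Lm := h1
      rw [hw, mulVec_sub, mulVec_mulVec, hLLX]
      simp
    have hconst : ∀ i j : Fin n, w i = w j := by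
      intro i j
      have h0 : Matrix.toLin' (G.lapMatrix ℝ) w = 0 := by
        rw [Matrix.toLin'_apply]
        exact hLw
      rw [Matrix.toLin'_apply, G.lapMatrix_mulVec_eq_zero_iff_forall_reachable] at h0
      exact h0 i j (hconn i j)
    have hsw : ∑ i : Fin n, w i = 0 := by
      have h1s : ∑ i : Fin n, ((Lm * X) *ᵥ x) i = 0 := by
        have hd : (fun _ : Fin n => (1:ℝ)) ⬝ᵥ ((Lm * X) *ᵥ x) = 0 := by
          rw [dotProduct_mulVec]
          have hvm : (fun _ : Fin n => (1:ℝ)) ᵥ* (Lm * X) = 0 := by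
            rw [← vecMul_vecMul]
            have hv1 : (fun _ : Fin n => (1:ℝ)) ᵥ* Lm = 0 := by
              rw [← mulVec_transpose, hsymm]
              exact G.lapMatrix_mulVec_const_eq_zero
            rw [hv1]
            simp [vecMul, dotProduct]
          rw [hvm]
          simp
        simpa [dotProduct] using hd
      simp [hw, Finset.sum_sub_distrib, h1s, hsum]
    have hw0 : ∀ i, w i = 0 := by
      intro i
      have hsum' : ∑ k : Fin n, w k = (n : ℝ) * w i := by
        rw [Finset.sum_congr rfl fun k _ => hconst k i]
        simp [Finset.card_univ, mul_comm]
      rw [hsw] at hsum'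
      have hn0 : (n : ℝ) ≠ 0 := by positivity
      rcases mul_eq_zero.mp hsum'.symm with h | h
      · exact absurd h hn0
      · exact h
    have : (Lm * X) *ᵥ x = x := by
      funext i
      have := hw0 i
      simp only [hw, Pi.sub_apply] at this
      linarith
    show Lm *ᵥ (X *ᵥ x) = x
    rw [mulVec_mulVec]
    exact this
  -- quadratic form value
  set q := x ⬝ᵥ X.mulVec x with hq
  have hq' : q = (∑ i : Fin n, ∑ j : Fin n, if G.Adj i j then (z i - z j)^2 else 0) / 2 := by
    have h2' : Matrix.toLinearMap₂' ℝ (G.lapMatrix ℝ) z z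
        = (∑ i : Fin n, ∑ j : Fin n, if G.Adj i j then (z i - z j)^2 else 0) / 2 :=
      G.lapMatrix_toLinearMap₂' ℝ z
    rw [Matrix.toLinearMap₂'_apply'] at h2'
    rw [← h2', ← hLm, hker, dotProduct_comm]
  -- per-vertex identity : x u = ∑ over neighbors of (z u - z v)
  have hxu : ∀ u : Fin n, x u = ∑ v ∈ G.neighborFinset u, (z u - z v) := by
    intro u
    have := congrFun hker u
    rw [G.lapMatrix_mulVec_apply] at this
    rw [← this, Finset.sum_sub_distrib, Finset.sum_const, G.card_neighborFinset_eq_degree]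
    simp [nsmul_eq_mul]
  -- Cauchy-Schwarz per vertex
  have hCS : ∀ u : Fin n, (x u)^2 ≤ (G.degree u : ℝ) * ∑ v ∈ G.neighborFinset u, (z u - z v)^2 := by
    intro u
    rw [hxu u]
    have := sq_sum_le_card_mul_sum_sq (s := G.neighborFinset u)
      (f := fun v => z u - z v)
    simpa [G.card_neighborFinset_eq_degree] using this
  -- extract a maximum independent set
  have hmem : indepNum G ∈
      {k | ∃ S : Finset (Fin n), (∀ u ∈ S, ∀ v ∈ S, u ≠ v → ¬ G.Adj u v) ∧ S.card = k} := by
    apply Nat.sSup_mem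
    · exact ⟨0, ∅, by simp⟩
    · exact ⟨Fintype.card (Fin n), fun k ⟨S, _, hS⟩ => hS ▸ Finset.card_le_univ S⟩
  obtain ⟨S, hind, hcard⟩ := hmem
  -- edge sum over the independent set is at most q
  set f : Fin n → Fin n → ℝ := fun i j => if G.Adj i j then (z i - z j)^2 else 0 with hf
  have hf0 : ∀ i j, 0 ≤ f i j := by
    intro i j
    simp only [hf]
    split <;> positivity
  have hfsymm : ∀ i j, f i j = f j i := by
    intro i j
    simp only [hf, G.adj_comm i j]
    split <;> ring_nf
  have hSzero : ∀ u ∈ S, ∀ j ∈ S, f u j = 0 := by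
    intro u hu j hj
    simp only [hf]
    rcases eq_or_ne u j with rfl | hne'
    · simp
    · rw [if_neg (hind u hu j hj hne')]
  have hedge : ∑ u ∈ S, ∑ j : Fin n, f u j ≤ q := by
    have hsplit : ∑ u : Fin n, ∑ j : Fin n, f u j
        = ∑ u ∈ S, ∑ j : Fin n, f u j + ∑ u ∈ Sᶜ, ∑ j : Fin n, f u j := by
      rw [← Finset.sum_add_sum_compl S]
    have hS_le : ∑ u ∈ S, ∑ j : Fin n, f u j ≤ ∑ u ∈ Sᶜ, ∑ j : Fin n, f u j := by
      have h1' : ∑ u ∈ S, ∑ j : Fin n, f u j = ∑ u ∈ S, ∑ j ∈ Sᶜ, f u j := by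
        refine Finset.sum_congr rfl fun u hu => ?_
        rw [← Finset.sum_add_sum_compl S (fun j => f u j)]
        rw [Finset.sum_eq_zero (fun j hj => hSzero u hu j hj)]
        ring
      rw [h1', Finset.sum_comm]
      refine Finset.sum_le_sum fun j _ => ?_
      calc ∑ u ∈ S, f u j = ∑ u ∈ S, f j u := Finset.sum_congr rfl fun u _ => hfsymm u j
      _ ≤ ∑ u : Fin n, f j u :=
          Finset.sum_le_sum_of_subset_of_nonneg (Finset.subset_univ S)
            (fun i _ _ => hf0 j i)
    have : 2 * ∑ u ∈ S, ∑ j : Fin n, f u j ≤ ∑ u : Fin n, ∑ j : Fin n, f u j := by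
      rw [hsplit]; linarith
    rw [hq']
    linarith
  -- per-vertex bound summed over S
  have hTbound : ∀ u : Fin n, (x u)^2 / (G.degree u : ℝ) ≤ ∑ j : Fin n, f u j := by
    intro u
    have hd : (0:ℝ) < (G.degree u : ℝ) := by exact_mod_cast hdeg u
    rw [div_le_iff₀ hd]
    have hrw : ∑ j : Fin n, f u j = ∑ v ∈ G.neighborFinset u, (z u - z v)^2 := by
      rw [G.neighborFinset_eq_filter, Finset.sum_filter]
    rw [hrw, mul_comm]
    exact hCS u
  have hsumS : ∑ u ∈ S, (x u)^2 / (G.degree u : ℝ) ≤ q := by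
    calc ∑ u ∈ S, (x u)^2 / (G.degree u : ℝ) ≤ ∑ u ∈ S, ∑ j : Fin n, f u j :=
        Finset.sum_le_sum fun u _ => hTbound u
    _ ≤ q := hedge
  -- the supremum
  set M := ⨆ u : Fin n, Lm u u / (x u) ^ 2 with hM
  have hLdiag : ∀ u : Fin n, Lm u u = (G.degree u : ℝ) := by
    intro u
    simp [hLm, SimpleGraph.lapMatrix, SimpleGraph.degMatrix, Matrix.diagonal_apply_eq]
  have hMle : ∀ u : Fin n, (G.degree u : ℝ) / (x u)^2 ≤ M := by
    intro u
    have := le_ciSup (f := fun u : Fin n => Lm u u / (x u) ^ 2)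
      (Set.Finite.bddAbove (Set.finite_range _)) u
    rwa [hLdiag u] at this
  have hMpos : 0 < M := by
    rcases hne with ⟨u⟩
    have hd : (0:ℝ) < (G.degree u : ℝ) := by exact_mod_cast hdeg u
    have hx2 : (0:ℝ) < (x u)^2 := by have := hx u; positivity
    exact lt_of_lt_of_le (div_pos hd hx2) (hMle u)
  -- final computation
  have hfinal : (S.card : ℝ) ≤ q * M := by
    have h1' : (S.card : ℝ) = ∑ u ∈ S, (1:ℝ) := by simp
    rw [h1']
    calc ∑ u ∈ S, (1:ℝ) ≤ ∑ u ∈ S, ((x u)^2 / (G.degree u : ℝ)) * M := by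
          refine Finset.sum_le_sum fun u _ => ?_
          have hd : (0:ℝ) < (G.degree u : ℝ) := by exact_mod_cast hdeg u
          have hx2 : (0:ℝ) < (x u)^2 := by have := hx u; positivity
          have : ((x u)^2 / (G.degree u : ℝ)) * ((G.degree u : ℝ) / (x u)^2) = 1 := by
            have := hx u
            field_simp
          rw [← this]
          exact mul_le_mul_of_nonneg_left (hMle u) (by positivity)
    _ = (∑ u ∈ S, (x u)^2 / (G.degree u : ℝ)) * M := by rw [Finset.sum_mul]
    _ ≤ q * M := mul_le_mul_of_nonneg_right hsumS hMpos.le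
  rw [← hcard] at *
  push_cast
  exact hfinal
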